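/- arXiv:1611.06389 — 2 statements merged into one kernel-verified Lean document; each statement's English description precedes it below -/
import Mathlib

section
/- Let →₀ and →₁ be binary relations on a set S. Set →₂ := →₀* ∘ →₁ and →₃ := →₀ ∪ →₁. Let a be an element of the domain of →₃ and let a' be a →₃-normal form of a. Set A := {b | a →₃* b} and let →₄ be the domain-restriction of →₃ to A. Assume: (1) the reverse of the range-restriction of →₀ to A is well-founded; (2) there is an upper bound n ∈ ℕ on the length of →₂-derivations starting from a and reaching a' by →₀*, i.e., m ≤ n for every m ∈ ℕ and every sequence b₀, …, b_m with a = b₀, b_i →₂ b_{i+1} for each i ∈ {0, …, m−1}, and b_m →₀* a'; (3) for all b₁, b₂ such that some c satisfies c →₄ b₁ and c →₁ b₂, there is d with b₁ →₄* d and b₂ →₄* d; (4) for all b₁, b₂ such that some c satisfies c →₄ b₁ and c →₀ b₂, there is d with b₁ →₄* d and b₂ →₄⁼ d. Then the reverse of →₄ is well-founded. -/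
open Relation

/-- An `r0 ∪ r1`-path from `x` to `z` using exactly `m` steps of `r1`. -/
inductive KPath {S : Type*} (r0 r1 : S → S → Prop) : S → S → ℕ → Prop where
  | refl (x : S) : KPath r0 r1 x x 0
  | step0 {x y z : S} {m : ℕ} : r0 x y → KPath r0 r1 y z m → KPath r0 r1 x z m
  | step1 {x y z : S} {m : ℕ} : r1 x y → KPath r0 r1 y z m → KPath r0 r1 x z (m + 1)

/-- generalization of Klop's Theorem I.5.18, the paper's main tool.
Relations `r0` (`→₀`), `r1` (`→₁`) on `S`; `r2 = →₀* ∘ →₁`; `r3 = →₀ ∪ →₁`;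
`a ∈ dom →₃`; `a'` a `→₃`-normal form of `a`; `A = {b | a →₃* b}`;
`r4` the domain-restriction of `→₃` to `A`.  Under hypotheses (1)–(4),
the reverse of `→₄` is well-founded. -/
theorem stmt0 {S : Type*} (r0 r1 r2 r3 r4 : S → S → Prop) (A : Set S)
    (a a' : S) (n : ℕ)
    (hr2 : ∀ x z, r2 x z ↔ ∃ y, ReflTransGen r0 x y ∧ r1 y z)
    (hr3 : ∀ x y, r3 x y ↔ r0 x y ∨ r1 x y)
    (hA : ∀ b, b ∈ A ↔ ReflTransGen r3 a b)
    (hr4 : ∀ x y, r4 x y ↔ r3 x y ∧ x ∈ A)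
    (hadom : ∃ b, r3 a b)
    (hnf₁ : ReflTransGen r3 a a')
    (hnf₂ : ∀ b, ¬ r3 a' b)
    -- (1) the reverse of the range-restriction of →₀ to A is well-founded
    (h1 : WellFounded (fun b c => r0 c b ∧ b ∈ A))
    -- (2) upper bound n on the length of →₂-derivations from a reaching a' by →₀*
    (h2 : ∀ (m : ℕ) (b : ℕ → S), b 0 = a → (∀ i < m, r2 (b i) (b (i + 1))) →
      ReflTransGen r0 (b m) a' → m ≤ n)
    -- (3) peaks of →₄ against →₁ are joinable by →₄* on both sides
    (h3 : ∀ b₁ b₂, (∃ c, r4 c b₁ ∧ r1 c b₂) →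
      ∃ d, ReflTransGen r4 b₁ d ∧ ReflTransGen r4 b₂ d)
    -- (4) peaks of →₄ against →₀ are joinable by →₄* and →₄⁼
    (h4 : ∀ b₁ b₂, (∃ c, r4 c b₁ ∧ r0 c b₂) →
      ∃ d, ReflTransGen r4 b₁ d ∧ ReflGen r4 b₂ d) :
    WellFounded (fun x y => r4 y x) := by
  -- basic facts
  have memA : ∀ {c b : S}, c ∈ A → r3 c b → b ∈ A := fun hc h =>
    (hA _).2 (((hA _).1 hc).tail h)
  have r4_of : ∀ {c b : S}, c ∈ A → r3 c b → r4 c b := fun hc h => (hr4 _ _).2 ⟨h, hc⟩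
  have r4_r3 : ∀ {c b : S}, r4 c b → r3 c b := fun h => ((hr4 _ _).1 h).1
  have r4_memA : ∀ {c b : S}, r4 c b → c ∈ A := fun h => ((hr4 _ _).1 h).2
  have rtg43 : ∀ {c b : S}, ReflTransGen r4 c b → ReflTransGen r3 c b := fun h =>
    ReflTransGen.mono (fun _ _ hh => r4_r3 hh) _ _ h
  -- path lemmas
  have path_zero : ∀ {x z : S} {m : ℕ}, KPath r0 r1 x z m → m = 0 → ReflTransGen r0 x z := by
    intro x z m h
    induction h with
    | refl => intro _; exact ReflTransGen.refl
    | step0 h _ ih => intro hm; exact ReflTransGen.head h (ih hm)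
    | step1 h _ _ => intro hm; exact absurd hm (Nat.succ_ne_zero _)
  have path_split : ∀ {x z : S} {m' : ℕ}, KPath r0 r1 x z m' → ∀ m, m' = m + 1 →
      ∃ y y', ReflTransGen r0 x y ∧ r1 y y' ∧ KPath r0 r1 y' z m := by
    intro x z m' h
    induction h with
    | refl => intro m hm; exact absurd hm (by omega)
    | step0 h _ ih =>
      intro m hm
      obtain ⟨y, y', hy, hy', hp⟩ := ih m hm
      exact ⟨y, y', ReflTransGen.head h hy, hy', hp⟩
    | step1 h hp ih =>
      intro m hm
      have hm' := Nat.succ_injective hm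
      subst hm'
      exact ⟨_, _, ReflTransGen.refl, h, hp⟩
  have path_app0 : ∀ {x y : S} {m : ℕ}, KPath r0 r1 x y m → ∀ {z}, r0 y z →
      KPath r0 r1 x z m := by
    intro x y m h
    induction h with
    | refl => intro z hz; exact KPath.step0 hz (KPath.refl z)
    | step0 h _ ih => intro z hz; exact KPath.step0 h (ih hz)
    | step1 h _ ih => intro z hz; exact KPath.step1 h (ih hz)
  have path_app1 : ∀ {x y : S} {m : ℕ}, KPath r0 r1 x y m → ∀ {z}, r1 y z →
      KPath r0 r1 x z (m + 1) := by
    intro x y m h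
    induction h with
    | refl => intro z hz; exact KPath.step1 hz (KPath.refl z)
    | step0 h _ ih => intro z hz; exact KPath.step0 h (ih hz)
    | step1 h _ ih => intro z hz; exact KPath.step1 h (ih hz)
  have path_trans : ∀ {x y : S} {m : ℕ}, KPath r0 r1 x y m → ∀ {z k}, KPath r0 r1 y z k →
      KPath r0 r1 x z (m + k) := by
    intro x y m h
    induction h with
    | refl => intro z k h2; simpa using h2
    | step0 h _ ih => intro z k h2; exact KPath.step0 h (ih h2)
    | step1 h _ ih =>
      intro z k h2
      have h3 := KPath.step1 h (ih h2)
      rw [Nat.add_right_comm]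
      exact h3
  have rtg_toPath : ∀ {x y : S}, ReflTransGen r3 x y → ∃ m, KPath r0 r1 x y m := by
    intro x y h
    induction h with
    | refl => exact ⟨0, KPath.refl x⟩
    | tail _ hstep ih =>
      obtain ⟨m, p⟩ := ih
      rcases (hr3 _ _).1 hstep with h0 | h1
      · exact ⟨m, path_app0 p h0⟩
      · exact ⟨m + 1, path_app1 p h1⟩
  -- bound on the number of r1-steps in any path from a to a'
  have seq : ∀ m, ∀ x : S, KPath r0 r1 x a' m → ∃ b : ℕ → S, b 0 = x ∧
      (∀ i < m, r2 (b i) (b (i + 1))) ∧ ReflTransGen r0 (b m) a' := by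
    intro m
    induction m with
    | zero =>
      intro x hp
      exact ⟨fun _ => x, rfl, fun i hi => absurd hi (Nat.not_lt_zero i), path_zero hp rfl⟩
    | succ m ih =>
      intro x hp
      obtain ⟨y, y', hy, hy', hp'⟩ := path_split hp m rfl
      obtain ⟨b, hb0, hbs, hbe⟩ := ih y' hp'
      refine ⟨fun i => if i = 0 then x else b (i - 1), rfl, ?_, ?_⟩
      · intro i hi
        cases i with
        | zero =>
          simp only [if_pos rfl, if_neg (Nat.one_ne_zero)]
          simpa [hb0] using (hr2 x y').2 ⟨y, hy, hy'⟩
        | succ i =>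
          simp only [if_neg (Nat.succ_ne_zero i), if_neg (Nat.succ_ne_zero (i + 1)),
            Nat.succ_sub_one, Nat.add_sub_cancel]
          exact hbs i (by omega)
      · simp only [if_neg (Nat.succ_ne_zero m), Nat.succ_sub_one]
        exact hbe
  have path_bound : ∀ {m : ℕ}, KPath r0 r1 a a' m → m ≤ n := by
    intro m hp
    obtain ⟨b, h0, hs, he⟩ := seq m a hp
    exact h2 m b h0 hs he
  have count_le : ∀ {c : S} {k : ℕ}, KPath r0 r1 a c k → ReflTransGen r3 c a' → k ≤ n := by
    intro c k p hg
    obtain ⟨m, q⟩ := rtg_toPath hg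
    have := path_bound (path_trans p q)
    omega
  -- Claim C: every reduct of a normalizes to a'
  have main : ∀ j, ∀ c : S, (∃ k, KPath r0 r1 a c k ∧ n - k = j) → ReflTransGen r3 c a' →
      ∀ b, r4 c b → ReflTransGen r3 b a' := by
    intro j
    induction j using Nat.strong_induction_on with
    | _ j IH1 =>
      have L : ∀ {c₁ d : S}, ReflTransGen r4 c₁ d → ∀ k', KPath r0 r1 a c₁ k' → n - k' < j →
          ReflTransGen r3 c₁ a' → ReflTransGen r3 d a' := by
        intro c₁ d hrt
        induction hrt using ReflTransGen.head_induction_on with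
        | refl => intro k' _ _ hg; exact hg
        | head hstep _ ih =>
          intro k' hp hlt hg
          have hg' := IH1 _ hlt _ ⟨k', hp, rfl⟩ hg _ hstep
          rcases (hr3 _ _).1 (r4_r3 hstep) with h0 | h1
          · exact ih k' (path_app0 hp h0) hlt hg'
          · exact ih (k' + 1) (path_app1 hp h1) (by omega) hg'
      intro c
      induction c using h1.induction with
      | _ c IH2 =>
        intro hw hg b hb
        obtain ⟨k, hp, hj⟩ := hw
        rcases ReflTransGen.cases_head hg with rfl | ⟨c₁, hstep, hg'⟩
        · exact absurd (r4_r3 hb) (hnf₂ b)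
        · have hcA : c ∈ A := r4_memA hb
          have hc₁A : c₁ ∈ A := memA hcA hstep
          rcases (hr3 _ _).1 hstep with h0 | hh1
          · obtain ⟨d, hbd, hc₁d⟩ := h4 b c₁ ⟨c, hb, h0⟩
            have hgd : ReflTransGen r3 d a' := by
              rcases hc₁d with _ | hstep'
              · exact hg'
              · exact IH2 c₁ ⟨h0, hc₁A⟩ ⟨k, path_app0 hp h0, hj⟩ hg' d hstep'
            exact (rtg43 hbd).trans hgd
          · obtain ⟨d, hbd, hc₁d⟩ := h3 b c₁ ⟨c, hb, hh1⟩
            have hpc₁ : KPath r0 r1 a c₁ (k + 1) := path_app1 hp hh1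
            have hkn : k + 1 ≤ n := count_le hpc₁ hg'
            have hgd : ReflTransGen r3 d a' := L hc₁d (k + 1) hpc₁ (by omega) hg'
            exact (rtg43 hbd).trans hgd
  have goodA : ∀ c : S, c ∈ A → ReflTransGen r3 c a' := by
    intro c hc
    have h := (hA c).1 hc
    clear hc
    induction h with
    | refl => exact hnf₁
    | tail hab hstep ih =>
      rename_i b c
      have hbA : b ∈ A := (hA _).2 hab
      obtain ⟨k, p⟩ := rtg_toPath hab
      exact main (n - k) b ⟨k, p, rfl⟩ ih c (r4_of hbA hstep)
  -- Phase 2: accessibility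
  have acc : ∀ j, ∀ c : S, (∃ k, KPath r0 r1 a c k ∧ n - k = j) →
      Acc (fun x y => r4 y x) c := by
    intro j
    induction j using Nat.strong_induction_on with
    | _ j IH1 =>
      intro c
      induction c using h1.induction with
      | _ c IH2 =>
        intro hw
        obtain ⟨k, hp, hj⟩ := hw
        constructor
        intro b hb
        have hbA : b ∈ A := memA (r4_memA hb) (r4_r3 hb)
        rcases (hr3 _ _).1 (r4_r3 hb) with h0 | hh1
        · exact IH2 b ⟨h0, hbA⟩ ⟨k, path_app0 hp h0, hj⟩
        · have hpb : KPath r0 r1 a b (k + 1) := path_app1 hp hh1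
          have hkn : k + 1 ≤ n := count_le hpb (goodA b hbA)
          exact IH1 (n - (k + 1)) (by omega) b ⟨k + 1, hpb, rfl⟩
  constructor
  intro c
  by_cases hc : c ∈ A
  · obtain ⟨k, p⟩ := rtg_toPath ((hA c).1 hc)
    exact acc (n - k) c ⟨k, p, rfl⟩
  · constructor
    intro b hb
    exact absurd (r4_memA hb) hc
end

section
/- Let →₀ and →₁ be binary relations on a set S. Set →₂ := →₀* ∘ →₁ and →₃ := →₀ ∪ →₁. Let a be an element of the domain of →₃ and let a' be a →₃-normal form of a. Set A := {b | a →₃* b} and let →₄ be the domain-restriction of →₃ to A. Assume: (2) there is an upper bound n ∈ ℕ on the length of →₂-derivations starting from a and reaching a' by →₀*, i.e., m ≤ n for every m ∈ ℕ and every sequence b₀, …, b_m with a = b₀, b_i →₂ b_{i+1} for each i ∈ {0, …, m−1}, and b_m →₀* a'; (3) for all b₁, b₂ such that some c satisfies c →₄ b₁ and c →₁ b₂, there is d with b₁ →₄* d and b₂ →₄* d; (4) for all b₁, b₂ such that some c satisfies c →₄ b₁ and c →₀ b₂, there is d with b₁ →₄* d and b₂ →₄⁼ d. Then A = {b ∈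 A | b →₄* a'}; that is, every b with a →₃* b satisfies b →₄* a' (so a' is a →₃-normal form of every element reachable from a). -/
open Relation

section SChainAux

variable {S : Type*} (r0 r1 r4 : S → S → Prop)

/-- An `r4`-chain from `x` to `z` where each step is marked as an `r0`-step or
an `r1`-step, counting the number of `r1`-steps. -/
inductive SChain : S → S → ℕ → Prop
  | refl (x : S) : SChain x x 0
  | step0 {x y z : S} {q : ℕ} : r4 x y → r0 x y → SChain y z q → SChain x z q
  | step1 {x y z : S} {q : ℕ} : r4 x y → r1 x y → SChain y z q → SChain x z (q + 1)

variable {r0 r1 r4}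

lemma SChain.trans {x y z : S} {p q : ℕ} (h1 : SChain r0 r1 r4 x y p)
    (h2 : SChain r0 r1 r4 y z q) : SChain r0 r1 r4 x z (p + q) := by
  induction h1 with
  | refl => rwa [Nat.zero_add]
  | step0 h4 h0 _ ih => exact SChain.step0 h4 h0 (ih h2)
  | step1 h4 h1' _ ih =>
    have := SChain.step1 h4 h1' (ih h2)
    rwa [Nat.add_right_comm] at this

lemma SChain.ofRTG (hsplit : ∀ x y, r4 x y → r0 x y ∨ r1 x y) {x y : S}
    (h : ReflTransGen r4 x y) : ∃ q, SChain r0 r1 r4 x y q := by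
  induction h with
  | refl => exact ⟨0, SChain.refl x⟩
  | tail _ hstep ih =>
    obtain ⟨q, ch⟩ := ih
    rcases hsplit _ _ hstep with h0 | h1
    · exact ⟨q, ch.trans (SChain.step0 hstep h0 (SChain.refl _))⟩
    · exact ⟨q + 1, ch.trans (SChain.step1 hstep h1 (SChain.refl _))⟩

lemma SChain.toFun {r2 : S → S → Prop}
    (hr2 : ∀ x z, r2 x z ↔ ∃ y, ReflTransGen r0 x y ∧ r1 y z) {x a' : S} {q : ℕ}
    (h : SChain r0 r1 r4 x a' q) :
    ∃ b : ℕ → S, b 0 = x ∧ (∀ i < q, r2 (b i) (b (i + 1))) ∧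
      ReflTransGen r0 (b q) a' := by
  induction h with
  | refl w =>
    exact ⟨fun _ => w, rfl, fun i hi => absurd hi (Nat.not_lt_zero i), ReflTransGen.refl⟩
  | @step0 u v w p h4 h0 tl ih =>
    obtain ⟨b, hb0, hst, hend⟩ := ih
    refine ⟨fun i => if i = 0 then u else b i, if_pos rfl, ?_, ?_⟩
    · intro i hi
      rcases Nat.eq_zero_or_pos i with rfl | hip
      · simp only [if_pos rfl, if_neg Nat.one_ne_zero]
        have h01 := hst 0 hi
        rw [hr2] at h01 ⊢
        obtain ⟨w', hw1, hw2⟩ := h01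
        exact ⟨w', ReflTransGen.head h0 (hb0 ▸ hw1), hw2⟩
      · simp only [if_neg (by omega : i ≠ 0), if_neg (by omega : i + 1 ≠ 0)]
        exact hst i hi
    · rcases Nat.eq_zero_or_pos p with rfl | hp
      · simp only [if_pos rfl]
        exact ReflTransGen.head h0 (hb0 ▸ hend)
      · simp only [if_neg (by omega : p ≠ 0)]
        exact hend
  | @step1 u v w p h4 h1' tl ih =>
    obtain ⟨b, hb0, hst, hend⟩ := ih
    refine ⟨fun i => if i = 0 then u else b (i - 1), if_pos rfl, ?_, ?_⟩
    · intro i hi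
      rcases Nat.eq_zero_or_pos i with rfl | hip
      · simp only [if_pos rfl, if_neg Nat.one_ne_zero]
        rw [hr2]
        refine ⟨u, ReflTransGen.refl, ?_⟩
        simpa [hb0] using h1'
      · obtain ⟨j, rfl⟩ : ∃ j, i = j + 1 := ⟨i - 1, by omega⟩
        simp only [if_neg (by omega : j + 1 ≠ 0), if_neg (by omega : j + 1 + 1 ≠ 0),
          Nat.add_sub_cancel]
        exact hst j (by omega)
    · simp only [if_neg (by omega : p + 1 ≠ 0), Nat.add_sub_cancel]
      exact hend

end SChainAux

/-- Claims 2 and 3 in the proof of the paper's main theorem.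
Under hypotheses (2), (3), (4), the set `A = {b | a →₃* b}` equals
`{b ∈ A | b →₄* a'}`; i.e. every `b` reachable from `a` reduces to `a'`
by `→₄`. -/
theorem stmt2 {S : Type*} (r0 r1 r2 r3 r4 : S → S → Prop) (A : Set S)
    (a a' : S) (n : ℕ)
    (hr2 : ∀ x z, r2 x z ↔ ∃ y, ReflTransGen r0 x y ∧ r1 y z)
    (hr3 : ∀ x y, r3 x y ↔ r0 x y ∨ r1 x y)
    (hA : ∀ b, b ∈ A ↔ ReflTransGen r3 a b)
    (hr4 : ∀ x y, r4 x y ↔ r3 x y ∧ x ∈ A)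
    (hadom : ∃ b, r3 a b)
    (hnf₁ : ReflTransGen r3 a a')
    (hnf₂ : ∀ b, ¬ r3 a' b)
    -- (2) upper bound n on the length of →₂-derivations from a reaching a' by →₀*
    (h2 : ∀ (m : ℕ) (b : ℕ → S), b 0 = a → (∀ i < m, r2 (b i) (b (i + 1))) →
      ReflTransGen r0 (b m) a' → m ≤ n)
    -- (3) peaks of →₄ against →₁ are joinable by →₄* on both sides
    (h3 : ∀ b₁ b₂, (∃ c, r4 c b₁ ∧ r1 c b₂) →
      ∃ d, ReflTransGen r4 b₁ d ∧ ReflTransGen r4 b₂ d)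
    -- (4) peaks of →₄ against →₀ are joinable by →₄* and →₄⁼
    (h4 : ∀ b₁ b₂, (∃ c, r4 c b₁ ∧ r0 c b₂) →
      ∃ d, ReflTransGen r4 b₁ d ∧ ReflGen r4 b₂ d) :
    A = {b ∈ A | ReflTransGen r4 b a'} := by
  classical
  have hsplit : ∀ x y, r4 x y → r0 x y ∨ r1 x y :=
    fun x y h => (hr3 x y).mp ((hr4 x y).mp h).1
  -- lift r3-reachability from `a` to r4-reachability
  have key0 : ∀ c, ReflTransGen r3 a c → ReflTransGen r4 a c := by
    intro c h
    induction h with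
    | refl => exact ReflTransGen.refl
    | tail hxy hstep ih =>
      exact ih.tail ((hr4 _ _).mpr ⟨hstep, (hA _).mpr hxy⟩)
  have haa' : ReflTransGen r4 a a' := key0 a' hnf₁
  -- bound on the number of r1-steps in any marked chain from a that reaches a'
  have bound : ∀ (q : ℕ) (c : S), SChain r0 r1 r4 a c q → ReflTransGen r4 c a' → q ≤ n := by
    intro q c ch h
    obtain ⟨p, ch2⟩ := SChain.ofRTG hsplit h
    obtain ⟨b, hb0, hstep, hend⟩ := SChain.toFun hr2 (ch.trans ch2)
    have := h2 (q + p) b hb0 hstep hend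
    omega
  -- main lemma, by downward induction on the budget of r1-steps
  have M : ∀ (k q : ℕ), n + 1 - q ≤ k → ∀ c b, ReflTransGen r4 c a' →
      SChain r0 r1 r4 a c q → r4 c b → ReflTransGen r4 b a' := by
    intro k
    induction k with
    | zero =>
      intro q hq c b hca ch _
      exact absurd (bound q c ch hca) (by omega)
    | succ k ih =>
      intro q hq c b hca ch hcb
      by_cases hqn : n < q
      · exact absurd (bound q c ch hca) (by omega)
      · have MIH : ∀ q', q < q' → ∀ c b, ReflTransGen r4 c a' →
            SChain r0 r1 r4 a c q' → r4 c b → ReflTransGen r4 b a' := by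
          intro q' hq'
          exact ih q' (by omega)
        -- propagation: reachability of a' is preserved along r4-chains at higher budgets
        have S : ∀ x d, ReflTransGen r4 x d → ∀ q₁, q < q₁ → SChain r0 r1 r4 a x q₁ →
            ReflTransGen r4 x a' → ReflTransGen r4 d a' := by
          intro x d hxd
          induction hxd using ReflTransGen.head_induction_on with
          | refl => intro q₁ _ _ h; exact h
          | @head u w huw hwd ihw =>
            intro q₁ hq₁ chu hua'
            have hwa' := MIH q₁ hq₁ u w hua' chu huw
            rcases hsplit _ _ huw with h0 | h1
            · exact ihw q₁ hq₁ (chu.trans (SChain.step0 huw h0 (SChain.refl w))) hwa'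
            · exact ihw (q₁ + 1) (by omega)
                (chu.trans (SChain.step1 huw h1 (SChain.refl w))) hwa'
        have main : ∀ c, ReflTransGen r4 c a' → SChain r0 r1 r4 a c q →
            ∀ b, r4 c b → ReflTransGen r4 b a' := by
          intro c h
          induction h using ReflTransGen.head_induction_on with
          | refl =>
            intro _ b hb
            exact absurd ((hr4 a' b).mp hb).1 (hnf₂ b)
          | @head x y hxy hy ihy =>
            intro chx b hxb
            by_cases h1 : r1 x y
            · obtain ⟨d, hbd, hyd⟩ := h3 b y ⟨x, hxb, h1⟩
              have chy : SChain r0 r1 r4 a y (q + 1) :=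
                chx.trans (SChain.step1 hxy h1 (SChain.refl y))
              exact hbd.trans (S y d hyd (q + 1) (by omega) chy hy)
            · have h0 : r0 x y := (hsplit x y hxy).resolve_right h1
              obtain ⟨d, hbd, hyd⟩ := h4 b y ⟨x, hxb, h0⟩
              cases hyd with
              | refl => exact hbd.trans hy
              | single hyd' =>
                exact hbd.trans
                  (ihy (chx.trans (SChain.step0 hxy h0 (SChain.refl y))) d hyd')
        exact main c hca ch b hcb
  have Mall : ∀ (q : ℕ) (c b : S), ReflTransGen r4 c a' → SChain r0 r1 r4 a c q →
      r4 c b → ReflTransGen r4 b a' := fun q => M (n + 1 - q) q le_rfl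
  -- conclude
  ext b
  simp only [Set.mem_setOf_eq]
  constructor
  · intro hb
    refine ⟨hb, ?_⟩
    have hr : ReflTransGen r4 a b := key0 b ((hA b).mp hb)
    clear hb
    induction hr with
    | refl => exact haa'
    | tail hay hyb ihy =>
      obtain ⟨q, chq⟩ := SChain.ofRTG hsplit hay
      exact Mall q _ _ ihy chq hyb
  · exact fun h => h.1
end
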